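/- Let $n, m \geq 1$, $k \geq 1$, and $0 < P_0 \leq \cdots \leq P_k = 1$. Two players $A$ (with $m$ independent uniform hash draws per call) and $B$ (with $n$ draws) compete: at slot $\ell$, $A$ succeeds with probability $1-(1-P_\ell)^m$ and $B$ with probability $1-(1-P_\ell)^n$, independently, with all calls independent across slots; $A$ wins if it succeeds at a strictly earlier slot than $B$, and ties at the same slot are broken by a fair coin. Then the probability $L_{m,n}$ that $A$ loses satisfies $L_{m,n} = \frac{1}{2}\sum_{\ell=0}^{k} (1-(1-P_\ell)^n)(1+(1-P_\ell)^m) \prod_{i<\ell}(1-P_i)^{n+m}$. -/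

import Mathlib

open MeasureTheory

open MeasureTheory Set

namespace Stmt13Aux

instance : IsProbabilityMeasure (volume.restrict (Set.Icc (0:ℝ) 1)) := ⟨by simp⟩

noncomputable def kap (N : ℕ) : Measure (Fin N → ℝ) :=
  Measure.pi fun _ : Fin N => volume.restrict (Set.Icc (0:ℝ) 1)

instance (N : ℕ) : IsProbabilityMeasure (kap N) := by
  unfold kap; infer_instance

noncomputable def nu (k N : ℕ) : Measure (Fin (k+1) → Fin N → ℝ) :=
  Measure.pi fun _ : Fin (k+1) => kap N

instance (k N : ℕ) : IsProbabilityMeasure (nu k N) := by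
  unfold nu; infer_instance

lemma meas_forall (N : ℕ) (c : ℝ) : MeasurableSet {y : Fin N → ℝ | ∀ i, c < y i} := by
  have : {y : Fin N → ℝ | ∀ i, c < y i} = Set.pi Set.univ (fun _ => Set.Ioi c) := by
    ext y; simp [Set.mem_pi]
  rw [this]
  exact MeasurableSet.univ_pi fun _ => measurableSet_Ioi

lemma kap_forall (N : ℕ) (c : ℝ) (hc0 : 0 ≤ c) (hc1 : c ≤ 1) :
    kap N {y | ∀ i, c < y i} = ENNReal.ofReal ((1 - c) ^ N) := by
  have h : {y : Fin N → ℝ | ∀ i, c < y i} = Set.pi Set.univ (fun _ => Set.Ioi c) := by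
    ext y; simp [Set.mem_pi]
  rw [kap, h, Measure.pi_pi]
  have h1 : volume.restrict (Set.Icc (0:ℝ) 1) (Set.Ioi c) = ENNReal.ofReal (1 - c) := by
    rw [Measure.restrict_apply measurableSet_Ioi]
    have : Set.Ioi c ∩ Set.Icc (0:ℝ) 1 = Set.Ioc c 1 := by
      ext x; simp only [Set.mem_inter_iff, Set.mem_Ioi, Set.mem_Icc, Set.mem_Ioc]
      constructor
      · rintro ⟨h1, _, h3⟩; exact ⟨h1, h3⟩
      · rintro ⟨h1, h2⟩; exact ⟨h1, le_trans hc0 h1.le, h2⟩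
    rw [this, Real.volume_Ioc]
  simp [h1, ← ENNReal.ofReal_pow (by linarith : (0:ℝ) ≤ 1 - c)]

lemma kap_exists (N : ℕ) (c : ℝ) (hc0 : 0 ≤ c) (hc1 : c ≤ 1) :
    kap N {y | ∃ i, y i ≤ c} = ENNReal.ofReal (1 - (1 - c) ^ N) := by
  have h : {y : Fin N → ℝ | ∃ i, y i ≤ c} = {y : Fin N → ℝ | ∀ i, c < y i}ᶜ := by
    ext y; simp [not_forall, not_lt]
  rw [h, prob_compl_eq_one_sub (meas_forall N c), kap_forall N c hc0 hc1]
  have hle : (1 - c) ^ N ≤ 1 := pow_le_one₀ (by linarith) (by linarith)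
  have h0 : (0:ℝ) ≤ (1 - c) ^ N := pow_nonneg (by linarith) _
  rw [show (1:ENNReal) = ENNReal.ofReal 1 by simp, ← ENNReal.ofReal_sub _ h0]

variable (k N : ℕ) (P : ℕ → ℝ)

def NoSucc (ℓ : ℕ) : Set (Fin (k+1) → Fin N → ℝ) :=
  {x | ∀ j : Fin (k+1), (j:ℕ) < ℓ → ∀ i, P (j:ℕ) < x j i}

def Hit (ℓ : Fin (k+1)) : Set (Fin (k+1) → Fin N → ℝ) :=
  {x | (∃ i, x ℓ i ≤ P (ℓ:ℕ)) ∧ ∀ j : Fin (k+1), (j:ℕ) < (ℓ:ℕ) → ∀ i, P (j:ℕ) < x j i}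

noncomputable def Tf (x : Fin (k+1) → Fin N → ℝ) : ℕ :=
  sInf {ℓ : ℕ | ∃ h : ℓ < k + 1, ∃ i : Fin N, x ⟨ℓ, h⟩ i ≤ P ℓ}

lemma meas_NoSucc (ℓ : ℕ) : MeasurableSet (NoSucc k N P ℓ) := by
  have : NoSucc k N P ℓ =
      ⋂ j : Fin (k+1), ⋂ (_ : (j:ℕ) < ℓ), ⋂ i, {x : Fin (k+1) → Fin N → ℝ | P (j:ℕ) < x j i} := by
    ext x; simp [NoSucc]
  rw [this]
  refine MeasurableSet.iInter fun j => MeasurableSet.iInter fun _ => MeasurableSet.iInter fun i => ?_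
  exact measurableSet_lt measurable_const ((measurable_pi_apply j).comp measurable_id |>.eval)

lemma meas_exists_set (ℓ : Fin (k+1)) (c : ℝ) :
    MeasurableSet {x : Fin (k+1) → Fin N → ℝ | ∃ i, x ℓ i ≤ c} := by
  have : {x : Fin (k+1) → Fin N → ℝ | ∃ i, x ℓ i ≤ c}
      = ⋃ i, {x : Fin (k+1) → Fin N → ℝ | x ℓ i ≤ c} := by ext x; simp
  rw [this]
  exact MeasurableSet.iUnion fun i =>
    measurableSet_le ((measurable_pi_apply ℓ).eval) measurable_const

lemma meas_Hit (ℓ : Fin (k+1)) : MeasurableSet (Hit k N P ℓ) := by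
  have : Hit k N P ℓ = {x : Fin (k+1) → Fin N → ℝ | ∃ i, x ℓ i ≤ P (ℓ:ℕ)} ∩ NoSucc k N P ℓ := by
    ext x; rfl
  rw [this]
  exact (meas_exists_set k N (ℓ:Fin (k+1)) _).inter (meas_NoSucc k N P (ℓ:ℕ))

lemma nu_NoSucc (hP : ∀ j, j < k+1 → 0 ≤ P j ∧ P j ≤ 1) (ℓ : ℕ) (hℓ : ℓ ≤ k+1) :
    nu k N (NoSucc k N P ℓ) = ENNReal.ofReal (∏ j ∈ Finset.range ℓ, (1 - P j) ^ N) := by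
  have hset : NoSucc k N P ℓ = Set.pi Set.univ
      (fun j : Fin (k+1) => if (j:ℕ) < ℓ then {y : Fin N → ℝ | ∀ i, P (j:ℕ) < y i} else univ) := by
    ext x
    simp only [NoSucc, Set.mem_pi, Set.mem_univ, forall_true_left, Set.mem_setOf_eq]
    refine forall_congr' fun j => ?_
    by_cases h : (j:ℕ) < ℓ <;> simp [h]
  rw [nu, hset, Measure.pi_pi]
  have hfac : ∀ j : Fin (k+1),
      kap N (if (j:ℕ) < ℓ then {y : Fin N → ℝ | ∀ i, P (j:ℕ) < y i} else univ)
        = (fun j : ℕ => if j < ℓ then ENNReal.ofReal ((1 - P j) ^ N) else 1) (j:ℕ) := by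
    intro j
    by_cases h : (j:ℕ) < ℓ
    · simp only [h, if_true]
      exact kap_forall N _ (hP _ j.isLt).1 (hP _ j.isLt).2
    · simp [h]
  calc (∏ j : Fin (k+1), kap N (if (j:ℕ) < ℓ then {y : Fin N → ℝ | ∀ i, P (j:ℕ) < y i} else univ))
      = ∏ j : Fin (k+1), (fun j : ℕ => if j < ℓ then ENNReal.ofReal ((1 - P j) ^ N) else 1) (j:ℕ) :=
        Finset.prod_congr rfl fun j _ => hfac j
    _ = ∏ j ∈ Finset.range (k+1), (if j < ℓ then ENNReal.ofReal ((1 - P j) ^ N) else 1) :=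
        Fin.prod_univ_eq_prod_range (fun j : ℕ => if j < ℓ then ENNReal.ofReal ((1 - P j) ^ N) else 1) (k+1)
    _ = ∏ j ∈ Finset.range ℓ, (if j < ℓ then ENNReal.ofReal ((1 - P j) ^ N) else 1) := by
        refine (Finset.prod_subset (Finset.range_subset_range.2 hℓ) fun x _ hx => ?_).symm
        rw [if_neg (by simpa using hx)]
    _ = ∏ j ∈ Finset.range ℓ, ENNReal.ofReal ((1 - P j) ^ N) :=
        Finset.prod_congr rfl fun j hj => if_pos (Finset.mem_range.mp hj)
    _ = ENNReal.ofReal (∏ j ∈ Finset.range ℓ, (1 - P j) ^ N) := by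
        rw [← ENNReal.ofReal_prod_of_nonneg]
        intro j hj
        exact pow_nonneg (by linarith [(hP j (by have := Finset.mem_range.mp hj; omega)).2]) _

lemma nu_Hit (hP : ∀ j, j < k+1 → 0 ≤ P j ∧ P j ≤ 1) (ℓ : Fin (k+1)) :
    nu k N (Hit k N P ℓ) = ENNReal.ofReal
      ((1 - (1 - P (ℓ:ℕ)) ^ N) * ∏ j ∈ Finset.range (ℓ:ℕ), (1 - P j) ^ N) := by
  have hset : Hit k N P ℓ = Set.pi Set.univ
      (fun j : Fin (k+1) => if (j:ℕ) < (ℓ:ℕ) then {y : Fin N → ℝ | ∀ i, P (j:ℕ) < y i}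
        else if (j:ℕ) = (ℓ:ℕ) then {y : Fin N → ℝ | ∃ i, y i ≤ P (ℓ:ℕ)} else univ) := by
    ext x
    simp only [Hit, Set.mem_pi, Set.mem_univ, forall_true_left, Set.mem_setOf_eq]
    constructor
    · rintro ⟨h1, h2⟩ j
      by_cases hlt : (j:ℕ) < (ℓ:ℕ)
      · simpa [hlt] using h2 j hlt
      · by_cases heq : (j:ℕ) = (ℓ:ℕ)
        · have : j = ℓ := Fin.ext heq
          subst this
          simpa [hlt, heq] using h1
        · simp [hlt, heq]
    · intro h
      constructor
      · have := h ℓ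
        simpa using this
      · intro j hj i
        have := h j
        simp only [hj, if_true, Set.mem_setOf_eq] at this
        exact this i
  rw [nu, hset, Measure.pi_pi]
  have hfac : ∀ j : Fin (k+1),
      kap N (if (j:ℕ) < (ℓ:ℕ) then {y : Fin N → ℝ | ∀ i, P (j:ℕ) < y i}
        else if (j:ℕ) = (ℓ:ℕ) then {y : Fin N → ℝ | ∃ i, y i ≤ P (ℓ:ℕ)} else univ)
      = (fun j : ℕ => if j < (ℓ:ℕ) then ENNReal.ofReal ((1 - P j) ^ N)
          else if j = (ℓ:ℕ) then ENNReal.ofReal (1 - (1 - P (ℓ:ℕ)) ^ N) else 1) (j:ℕ) := by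
    intro j
    by_cases h1 : (j:ℕ) < (ℓ:ℕ)
    · simp only [h1, if_true]
      exact kap_forall N _ (hP _ j.isLt).1 (hP _ j.isLt).2
    · by_cases h2 : (j:ℕ) = (ℓ:ℕ)
      · simp only [if_neg h1, if_pos h2]
        exact kap_exists N _ (hP _ ℓ.isLt).1 (hP _ ℓ.isLt).2
      · simp [h1, h2]
  rw [Finset.prod_congr rfl fun j _ => hfac j,
    Fin.prod_univ_eq_prod_range (fun j : ℕ => if j < (ℓ:ℕ) then ENNReal.ofReal ((1 - P j) ^ N)
      else if j = (ℓ:ℕ) then ENNReal.ofReal (1 - (1 - P (ℓ:ℕ)) ^ N) else 1) (k+1)]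
  have hsub : ∏ j ∈ Finset.range (k+1), (if j < (ℓ:ℕ) then ENNReal.ofReal ((1 - P j) ^ N)
      else if j = (ℓ:ℕ) then ENNReal.ofReal (1 - (1 - P (ℓ:ℕ)) ^ N) else 1)
      = ∏ j ∈ Finset.range ((ℓ:ℕ)+1), (if j < (ℓ:ℕ) then ENNReal.ofReal ((1 - P j) ^ N)
      else if j = (ℓ:ℕ) then ENNReal.ofReal (1 - (1 - P (ℓ:ℕ)) ^ N) else 1) := by
    refine (Finset.prod_subset (Finset.range_subset_range.2 ℓ.isLt) fun x _ hx => ?_).symm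
    have : ¬ x < (ℓ:ℕ)+1 := by simpa using hx
    rw [if_neg (by omega), if_neg (by omega)]
  rw [hsub, Finset.prod_range_succ, if_neg (lt_irrefl _), if_pos rfl]
  have hprod : ∏ j ∈ Finset.range (ℓ:ℕ), (if j < (ℓ:ℕ) then ENNReal.ofReal ((1 - P j) ^ N)
      else if j = (ℓ:ℕ) then ENNReal.ofReal (1 - (1 - P (ℓ:ℕ)) ^ N) else 1)
      = ENNReal.ofReal (∏ j ∈ Finset.range (ℓ:ℕ), (1 - P j) ^ N) := by
    rw [Finset.prod_congr rfl fun j hj => if_pos (Finset.mem_range.mp hj),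
      ← ENNReal.ofReal_prod_of_nonneg]
    intro j hj
    have hjk : j < k + 1 := by have := Finset.mem_range.mp hj; omega
    exact pow_nonneg (by linarith [(hP j hjk).2]) _
  have hnn : 0 ≤ ∏ j ∈ Finset.range (ℓ:ℕ), (1 - P j) ^ N := by
    refine Finset.prod_nonneg fun j hj => pow_nonneg ?_ _
    have hjk : j < k + 1 := by have := Finset.mem_range.mp hj; omega
    linarith [(hP j hjk).2]
  rw [hprod, ← ENNReal.ofReal_mul hnn, mul_comm]

def Good : Set (Fin (k+1) → Fin N → ℝ) :=
  {x | ∃ i, x ⟨k, Nat.lt_succ_self k⟩ i ≤ P k}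

lemma nu_Good_compl (hN : 1 ≤ N) (hPk : P k = 1) : nu k N (Good k N P)ᶜ = 0 := by
  have hset : (Good k N P)ᶜ = Set.pi Set.univ
      (fun j : Fin (k+1) => if j = ⟨k, Nat.lt_succ_self k⟩
        then {y : Fin N → ℝ | ∀ i, P k < y i} else univ) := by
    ext x
    simp only [Good, Set.mem_compl_iff, Set.mem_setOf_eq, not_exists, not_le, Set.mem_pi,
      Set.mem_univ, forall_true_left]
    constructor
    · intro h j
      by_cases hj : j = ⟨k, Nat.lt_succ_self k⟩
      · subst hj; simpa using h
      · simp [hj]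
    · intro h i
      have h2 := h ⟨k, Nat.lt_succ_self k⟩
      rw [if_pos rfl] at h2
      exact h2 i
  rw [nu, hset, Measure.pi_pi]
  refine Finset.prod_eq_zero (Finset.mem_univ ⟨k, Nat.lt_succ_self k⟩) ?_
  rw [if_pos rfl, kap_forall N _ (by rw [hPk]; norm_num) (le_of_eq hPk), hPk]
  simp [zero_pow (by omega : N ≠ 0)]

lemma Tf_le (x : Fin (k+1) → Fin N → ℝ) : Tf k N P x ≤ k := by
  by_cases hS : {ℓ : ℕ | ∃ h : ℓ < k + 1, ∃ i : Fin N, x ⟨ℓ, h⟩ i ≤ P ℓ}.Nonempty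
  · obtain ⟨h, -⟩ := Nat.sInf_mem hS
    exact Nat.lt_succ_iff.mp h
  · rw [Set.not_nonempty_iff_eq_empty] at hS
    unfold Tf; rw [hS, Nat.sInf_empty]; exact Nat.zero_le _

lemma good_nonempty {x : Fin (k+1) → Fin N → ℝ} (hx : x ∈ Good k N P) :
    {ℓ : ℕ | ∃ h : ℓ < k + 1, ∃ i : Fin N, x ⟨ℓ, h⟩ i ≤ P ℓ}.Nonempty :=
  ⟨k, Nat.lt_succ_self k, hx⟩

lemma Tf_eq_iff {x : Fin (k+1) → Fin N → ℝ} (hx : x ∈ Good k N P) (ℓ : Fin (k+1)) :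
    Tf k N P x = (ℓ:ℕ) ↔ x ∈ Hit k N P ℓ := by
  set S := {ℓ : ℕ | ∃ h : ℓ < k + 1, ∃ i : Fin N, x ⟨ℓ, h⟩ i ≤ P ℓ} with hSdef
  have hne := good_nonempty k N P hx
  have hT : Tf k N P x = sInf S := rfl
  rw [hT]
  constructor
  · intro h
    constructor
    · have hmem : (ℓ:ℕ) ∈ S := h ▸ Nat.sInf_mem hne
      obtain ⟨h', i, hi⟩ := hmem
      exact ⟨i, by convert hi using 3⟩
    · intro j hj i
      have hnm : (j:ℕ) ∉ S := Nat.notMem_of_lt_sInf (by omega)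
      by_contra hcon
      push_neg at hcon
      exact hnm ⟨j.isLt, i, by convert hcon using 3⟩
  · rintro ⟨⟨i, hi⟩, hno⟩
    have hmem : (ℓ:ℕ) ∈ S := ⟨ℓ.isLt, i, by convert hi using 3⟩
    refine le_antisymm (Nat.sInf_le hmem) (le_of_not_gt fun hlt => ?_)
    obtain ⟨h', i', hi'⟩ := Nat.sInf_mem hne
    exact absurd hi' (not_le.mpr (by
      have := hno ⟨sInf S, h'⟩ (by simpa using hlt) i'
      exact this))

lemma lt_Tf_iff {x : Fin (k+1) → Fin N → ℝ} (hx : x ∈ Good k N P) (ℓ : ℕ) :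
    ℓ < Tf k N P x ↔ x ∈ NoSucc k N P (ℓ+1) := by
  set S := {ℓ : ℕ | ∃ h : ℓ < k + 1, ∃ i : Fin N, x ⟨ℓ, h⟩ i ≤ P ℓ} with hSdef
  have hne := good_nonempty k N P hx
  have hT : Tf k N P x = sInf S := rfl
  rw [hT]
  constructor
  · intro h j hj i
    have hnm : (j:ℕ) ∉ S := Nat.notMem_of_lt_sInf (by omega)
    by_contra hcon
    push_neg at hcon
    exact hnm ⟨j.isLt, i, by convert hcon using 3⟩
  · intro h
    by_contra hle
    push_neg at hle
    obtain ⟨h', i', hi'⟩ := Nat.sInf_mem hne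
    have := h ⟨sInf S, h'⟩ (by simpa using Nat.lt_succ_of_le hle) i'
    exact absurd hi' (not_le.mpr this)

lemma Hit_disjoint (ℓ ℓ' : Fin (k+1)) (h : ℓ ≠ ℓ') :
    Disjoint (Hit k N P ℓ) (Hit k N P ℓ') := by
  rw [Set.disjoint_left]
  rintro x ⟨⟨i, hi⟩, hno⟩ ⟨⟨i', hi'⟩, hno'⟩
  rcases lt_or_gt_of_ne (fun hc => h (Fin.ext hc) : (ℓ:ℕ) ≠ (ℓ':ℕ)) with hlt | hlt
  · exact absurd hi (not_le.mpr (hno' ℓ hlt i))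
  · exact absurd hi' (not_le.mpr (hno ℓ' hlt i'))

end Stmt13Aux

open Stmt13Aux in
/-- Block-nursing competition: `A` has `m` independent uniform hash draws per
slot and `B` has `n`; the first success slot of a player is the first slot `ℓ`
where one of its draws is `≤ P_ℓ`.  `A` loses if `B` succeeds strictly earlier,
plus half the probability of a tie.  Formula for the losing probability. -/
theorem stmt13 (n m k : ℕ) (hn : 1 ≤ n) (hm : 1 ≤ m) (hk : 1 ≤ k)
    (P : ℕ → ℝ) (hP0 : 0 < P 0) (hmono : ∀ i, i < k → P i ≤ P (i + 1)) (hPk : P k = 1)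
    (μ : Measure ((Fin (k + 1) → Fin m → ℝ) × (Fin (k + 1) → Fin n → ℝ)))
    (hμ : μ = (Measure.pi fun _ : Fin (k + 1) => Measure.pi fun _ : Fin m =>
        volume.restrict (Set.Icc (0 : ℝ) 1)).prod
      (Measure.pi fun _ : Fin (k + 1) => Measure.pi fun _ : Fin n =>
        volume.restrict (Set.Icc (0 : ℝ) 1)))
    (TA TB : (Fin (k + 1) → Fin m → ℝ) × (Fin (k + 1) → Fin n → ℝ) → ℕ)
    (hTA : ∀ ω, TA ω = sInf {ℓ : ℕ | ∃ h : ℓ < k + 1, ∃ i : Fin m, ω.1 ⟨ℓ, h⟩ i ≤ P ℓ})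
    (hTB : ∀ ω, TB ω = sInf {ℓ : ℕ | ∃ h : ℓ < k + 1, ∃ i : Fin n, ω.2 ⟨ℓ, h⟩ i ≤ P ℓ}) :
    (μ {ω | TB ω < TA ω}).toReal + (1 / 2) * (μ {ω | TA ω = TB ω}).toReal
      = (1 / 2) * ∑ ℓ ∈ Finset.range (k + 1),
          (1 - (1 - P ℓ) ^ n) * (1 + (1 - P ℓ) ^ m) *
            ∏ i ∈ Finset.range ℓ, (1 - P i) ^ (n + m) := by
  -- bounds on P
  have key : ∀ b, b ≤ k → ∀ a, a ≤ b → P a ≤ P b := by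
    intro b
    induction b with
    | zero => intro _ a ha; rw [Nat.le_zero.mp ha]
    | succ b ih =>
      intro hb a ha
      rcases Nat.lt_succ_iff_lt_or_eq.mp (Nat.lt_succ_of_le ha) with h | h
      · exact le_trans (ih (by omega) a (by omega)) (hmono b (by omega))
      · rw [h]
  have hPbd : ∀ j, j < k + 1 → 0 ≤ P j ∧ P j ≤ 1 := by
    intro j hj
    have h1 : P 0 ≤ P j := by
      rcases Nat.eq_zero_or_pos j with h | h
      · rw [h]
      · exact key j (by omega) 0 (by omega) |>.trans_eq rfl |> (fun h' => h')
    have h2 : P j ≤ P k := key k le_rfl j (by omega)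
    exact ⟨by linarith, by linarith [hPk ▸ h2]⟩
  have hμ' : μ = (nu k m).prod (nu k n) := hμ
  have hTA' : ∀ ω, TA ω = Tf k m P ω.1 := hTA
  have hTB' : ∀ ω, TB ω = Tf k n P ω.2 := hTB
  -- the bad (null) set
  set bad : Set ((Fin (k + 1) → Fin m → ℝ) × (Fin (k + 1) → Fin n → ℝ)) :=
    ((Good k m P)ᶜ ×ˢ (Set.univ : Set (Fin (k + 1) → Fin n → ℝ))) ∪
      ((Set.univ : Set (Fin (k + 1) → Fin m → ℝ)) ×ˢ (Good k n P)ᶜ) with hbaddef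
  have hbad : μ bad = 0 := by
    rw [hμ']
    refine measure_union_null ?_ ?_
    · rw [Measure.prod_prod, nu_Good_compl k m P hm hPk, zero_mul]
    · rw [Measure.prod_prod, nu_Good_compl k n P hn hPk, mul_zero]
  have hae : ∀ᵐ ω ∂μ, ω.1 ∈ Good k m P ∧ ω.2 ∈ Good k n P := by
    have h1 : ∀ᵐ ω ∂μ, ω ∉ bad := measure_eq_zero_iff_ae_notMem.mp hbad
    filter_upwards [h1] with ω hω
    constructor
    · by_contra hc
      exact hω (Or.inl ⟨hc, Set.mem_univ _⟩)
    · by_contra hc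
      exact hω (Or.inr ⟨Set.mem_univ _, hc⟩)
  -- nonnegativity facts
  have hq0 : ∀ j, j < k + 1 → 0 ≤ 1 - P j := fun j hj => by linarith [(hPbd j hj).2]
  have hprodnn : ∀ (N ℓ : ℕ), ℓ ≤ k + 1 → 0 ≤ ∏ j ∈ Finset.range ℓ, (1 - P j) ^ N := by
    intro N ℓ hℓ
    refine Finset.prod_nonneg fun j hj => pow_nonneg (hq0 j ?_) _
    have := Finset.mem_range.mp hj; omega
  have hfacnn : ∀ (N ℓ : ℕ), ℓ < k + 1 → 0 ≤ 1 - (1 - P ℓ) ^ N := by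
    intro N ℓ hℓ
    have := pow_le_one₀ (hq0 ℓ hℓ) (by linarith [(hPbd ℓ hℓ).1] : 1 - P ℓ ≤ 1) (n := N)
    linarith
  -- the "B strictly earlier" event
  have hlt : μ {ω | TB ω < TA ω} =
      ∑ ℓ : Fin (k+1), ENNReal.ofReal
        ((∏ j ∈ Finset.range ((ℓ:ℕ)+1), (1 - P j) ^ m) *
          ((1 - (1 - P (ℓ:ℕ)) ^ n) * ∏ j ∈ Finset.range (ℓ:ℕ), (1 - P j) ^ n)) := by
    have hcongr : μ {ω | TB ω < TA ω} =
        μ (⋃ ℓ : Fin (k+1), (NoSucc k m P ((ℓ:ℕ)+1)) ×ˢ (Hit k n P ℓ)) := by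
      apply measure_congr
      rw [Filter.eventuallyEq_set]
      filter_upwards [hae] with ω hω
      obtain ⟨h1, h2⟩ := hω
      simp only [Set.mem_setOf_eq, Set.mem_iUnion, Set.mem_prod]
      rw [hTA' ω, hTB' ω]
      constructor
      · intro hlt
        refine ⟨⟨Tf k n P ω.2, Nat.lt_succ_of_le (Tf_le k n P ω.2)⟩, ?_, ?_⟩
        · exact (lt_Tf_iff k m P h1 (Tf k n P ω.2)).mp hlt
        · exact (Tf_eq_iff k n P h2 ⟨Tf k n P ω.2, Nat.lt_succ_of_le (Tf_le k n P ω.2)⟩).mp rfl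
      · rintro ⟨ℓ, hA, hB⟩
        have e1 : Tf k n P ω.2 = (ℓ:ℕ) := (Tf_eq_iff k n P h2 ℓ).mpr hB
        have e2 : (ℓ:ℕ) < Tf k m P ω.1 := (lt_Tf_iff k m P h1 _).mpr hA
        omega
    have hdisj : Pairwise (Function.onFun Disjoint
        fun ℓ : Fin (k+1) => (NoSucc k m P ((ℓ:ℕ)+1)) ×ˢ (Hit k n P ℓ)) := by
      intro ℓ ℓ' h
      refine Set.disjoint_left.mpr fun ω hω hω' => ?_
      exact Set.disjoint_left.mp (Hit_disjoint k n P ℓ ℓ' h) hω.2 hω'.2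
    have hmeas : ∀ ℓ : Fin (k+1),
        MeasurableSet ((NoSucc k m P ((ℓ:ℕ)+1)) ×ˢ (Hit k n P ℓ)) :=
      fun ℓ => (meas_NoSucc k m P _).prod (meas_Hit k n P ℓ)
    rw [hcongr, hμ', measure_iUnion hdisj hmeas, tsum_fintype]
    refine Finset.sum_congr rfl fun ℓ _ => ?_
    rw [Measure.prod_prod, nu_NoSucc k m P hPbd ((ℓ:ℕ)+1) (by omega),
      nu_Hit k n P hPbd ℓ, ← ENNReal.ofReal_mul (hprodnn m ((ℓ:ℕ)+1) (by omega))]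
  -- the tie event
  have heq : μ {ω | TA ω = TB ω} =
      ∑ ℓ : Fin (k+1), ENNReal.ofReal
        (((1 - (1 - P (ℓ:ℕ)) ^ m) * ∏ j ∈ Finset.range (ℓ:ℕ), (1 - P j) ^ m) *
          ((1 - (1 - P (ℓ:ℕ)) ^ n) * ∏ j ∈ Finset.range (ℓ:ℕ), (1 - P j) ^ n)) := by
    have hcongr : μ {ω | TA ω = TB ω} =
        μ (⋃ ℓ : Fin (k+1), (Hit k m P ℓ) ×ˢ (Hit k n P ℓ)) := by
      apply measure_congr
      rw [Filter.eventuallyEq_set]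
      filter_upwards [hae] with ω hω
      obtain ⟨h1, h2⟩ := hω
      simp only [Set.mem_setOf_eq, Set.mem_iUnion, Set.mem_prod]
      rw [hTA' ω, hTB' ω]
      constructor
      · intro hEq
        refine ⟨⟨Tf k m P ω.1, Nat.lt_succ_of_le (Tf_le k m P ω.1)⟩, ?_, ?_⟩
        · exact (Tf_eq_iff k m P h1 ⟨Tf k m P ω.1, Nat.lt_succ_of_le (Tf_le k m P ω.1)⟩).mp rfl
        · exact (Tf_eq_iff k n P h2 ⟨Tf k m P ω.1, Nat.lt_succ_of_le (Tf_le k m P ω.1)⟩).mp hEq.symm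
      · rintro ⟨ℓ, hA, hB⟩
        have e1 : Tf k m P ω.1 = (ℓ:ℕ) := (Tf_eq_iff k m P h1 ℓ).mpr hA
        have e2 : Tf k n P ω.2 = (ℓ:ℕ) := (Tf_eq_iff k n P h2 ℓ).mpr hB
        omega
    have hdisj : Pairwise (Function.onFun Disjoint
        fun ℓ : Fin (k+1) => (Hit k m P ℓ) ×ˢ (Hit k n P ℓ)) := by
      intro ℓ ℓ' h
      refine Set.disjoint_left.mpr fun ω hω hω' => ?_
      exact Set.disjoint_left.mp (Hit_disjoint k n P ℓ ℓ' h) hω.2 hω'.2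
    have hmeas : ∀ ℓ : Fin (k+1), MeasurableSet ((Hit k m P ℓ) ×ˢ (Hit k n P ℓ)) :=
      fun ℓ => (meas_Hit k m P ℓ).prod (meas_Hit k n P ℓ)
    rw [hcongr, hμ', measure_iUnion hdisj hmeas, tsum_fintype]
    refine Finset.sum_congr rfl fun ℓ _ => ?_
    rw [Measure.prod_prod, nu_Hit k m P hPbd ℓ, nu_Hit k n P hPbd ℓ,
      ← ENNReal.ofReal_mul (mul_nonneg (hfacnn m _ ℓ.isLt) (hprodnn m _ (by omega)))]
  -- nonnegativity of the real summands
  have hAnn : ∀ ℓ : Fin (k+1), 0 ≤ (∏ j ∈ Finset.range ((ℓ:ℕ)+1), (1 - P j) ^ m) *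
      ((1 - (1 - P (ℓ:ℕ)) ^ n) * ∏ j ∈ Finset.range (ℓ:ℕ), (1 - P j) ^ n) :=
    fun ℓ => mul_nonneg (hprodnn m _ (by omega))
      (mul_nonneg (hfacnn n _ ℓ.isLt) (hprodnn n _ (by omega)))
  have hBnn : ∀ ℓ : Fin (k+1), 0 ≤ ((1 - (1 - P (ℓ:ℕ)) ^ m) * ∏ j ∈ Finset.range (ℓ:ℕ), (1 - P j) ^ m) *
      ((1 - (1 - P (ℓ:ℕ)) ^ n) * ∏ j ∈ Finset.range (ℓ:ℕ), (1 - P j) ^ n) :=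
    fun ℓ => mul_nonneg (mul_nonneg (hfacnn m _ ℓ.isLt) (hprodnn m _ (by omega)))
      (mul_nonneg (hfacnn n _ ℓ.isLt) (hprodnn n _ (by omega)))
  rw [hlt, heq,
    ← ENNReal.ofReal_sum_of_nonneg (fun ℓ _ => hAnn ℓ),
    ← ENNReal.ofReal_sum_of_nonneg (fun ℓ _ => hBnn ℓ),
    ENNReal.toReal_ofReal (Finset.sum_nonneg fun ℓ _ => hAnn ℓ),
    ENNReal.toReal_ofReal (Finset.sum_nonneg fun ℓ _ => hBnn ℓ),
    Fin.sum_univ_eq_sum_range (fun ℓ : ℕ => (∏ j ∈ Finset.range (ℓ+1), (1 - P j) ^ m) *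
      ((1 - (1 - P ℓ) ^ n) * ∏ j ∈ Finset.range ℓ, (1 - P j) ^ n)) (k+1),
    Fin.sum_univ_eq_sum_range (fun ℓ : ℕ => ((1 - (1 - P ℓ) ^ m) * ∏ j ∈ Finset.range ℓ, (1 - P j) ^ m) *
      ((1 - (1 - P ℓ) ^ n) * ∏ j ∈ Finset.range ℓ, (1 - P j) ^ n)) (k+1),
    Finset.mul_sum, Finset.mul_sum, ← Finset.sum_add_distrib]
  refine Finset.sum_congr rfl fun ℓ hℓ => ?_
  have hsplit : ∏ j ∈ Finset.range ℓ, (1 - P j) ^ (n + m)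
      = (∏ j ∈ Finset.range ℓ, (1 - P j) ^ n) * (∏ j ∈ Finset.range ℓ, (1 - P j) ^ m) := by
    rw [← Finset.prod_mul_distrib]
    exact Finset.prod_congr rfl fun j _ => pow_add _ _ _
  rw [hsplit, Finset.prod_range_succ]
  ring
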